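/- arXiv:2510.21003 — 3 statements merged into one kernel-verified Lean document; each statement's English description precedes it below -/
import Mathlib

section
/- Let n be a positive natural number and let p, q : EuclideanSpace ℝ (Fin n) → ℝ be differentiable functions that are strictly positive everywhere, both integrable with ∫ p = 1 and ∫ q = 1, and suppose their logarithmic gradients agree everywhere: for all x, (fderiv ℝ p x) / p(x) = (fderiv ℝ q x) / q(x) (equivalently, ∇ log p (x) = ∇ log q (x)). Then p = q. -/
open MeasureTheory

/-- Two strictly positive differentiable probability densities on `ℝⁿ` whose score
functions (logarithmic gradients, i.e. `fderiv` divided by the density value)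
coincide everywhere are equal. -/
theorem stmt_3 {n : ℕ} (hn : 0 < n)
    (p q : EuclideanSpace ℝ (Fin n) → ℝ)
    (hp : Differentiable ℝ p) (hq : Differentiable ℝ q)
    (hppos : ∀ x, 0 < p x) (hqpos : ∀ x, 0 < q x)
    (hpi : Integrable p) (hqi : Integrable q)
    (hp1 : ∫ x, p x = 1) (hq1 : ∫ x, q x = 1)
    (hscore : ∀ x, (p x)⁻¹ • fderiv ℝ p x = (q x)⁻¹ • fderiv ℝ q x) :
    p = q := by
  set f : EuclideanSpace ℝ (Fin n) → ℝ := fun x => p x / q x with hf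
  have hqne : ∀ x, q x ≠ 0 := fun x => (hqpos x).ne'
  have hkey : ∀ x, q x • fderiv ℝ p x = p x • fderiv ℝ q x := by
    intro x
    have h := congrArg (fun L => (p x * q x) • L) (hscore x)
    simp only [smul_smul] at h
    rwa [show p x * q x * (p x)⁻¹ = q x by field_simp [(hppos x).ne'],
      show p x * q x * (q x)⁻¹ = p x by field_simp [hqne x]] at h
  have hfd : ∀ x, HasFDerivAt f (0 : EuclideanSpace ℝ (Fin n) →L[ℝ] ℝ) x := by
    intro x
    have hinv : HasFDerivAt (fun y => (q y)⁻¹)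
        ((-(q x ^ 2)⁻¹) • fderiv ℝ q x) x :=
      (hasDerivAt_inv (hqne x)).comp_hasFDerivAt x (hq x).hasFDerivAt
    have h := (hp x).hasFDerivAt.mul hinv
    have hP : fderiv ℝ p x = ((q x)⁻¹ * p x) • fderiv ℝ q x := by
      calc fderiv ℝ p x = (q x)⁻¹ • (q x • fderiv ℝ p x) := by
            rw [smul_smul, inv_mul_cancel₀ (hqne x), one_smul]
        _ = ((q x)⁻¹ * p x) • fderiv ℝ q x := by rw [hkey x, smul_smul]
    have heq : (p x) • ((-(q x ^ 2)⁻¹) • fderiv ℝ q x) + (q x)⁻¹ • fderiv ℝ p x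
        = 0 := by
      rw [hP, smul_smul, smul_smul, ← add_smul,
        show p x * -(q x ^ 2)⁻¹ + (q x)⁻¹ * ((q x)⁻¹ * p x) = 0 by
          rw [pow_two]; field_simp; ring, zero_smul]
    have hfe : f = fun y => p y * (q y)⁻¹ := by
      funext y; simp [hf, div_eq_mul_inv]
    rw [hfe]
    rwa [heq] at h
  have hconst : ∀ x y, f x = f y :=
    is_const_of_fderiv_eq_zero (fun x => (hfd x).differentiableAt)
      (fun x => (hfd x).fderiv)
  have hpq : ∀ x, p x = (p 0 / q 0) * q x := by
    intro x
    have h := hconst x 0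
    simp only [hf] at h
    rw [div_eq_iff (hqne x)] at h
    exact h
  have hc1 : p 0 / q 0 = 1 := by
    have : (1 : ℝ) = (p 0 / q 0) * 1 := by
      calc (1 : ℝ) = ∫ x, p x := hp1.symm
        _ = ∫ x, (p 0 / q 0) * q x :=
            integral_congr_ae (Filter.Eventually.of_forall hpq)
        _ = (p 0 / q 0) * ∫ x, q x := integral_const_mul _ _
        _ = (p 0 / q 0) * 1 := by rw [hq1]
    linarith
  funext x
  rw [hpq x, hc1, one_mul]
end

section
/- Let (Ω, ℙ) be a probability space, V ≥ 1, c : Fin V → ℝ, and p : Fin V → ℝ≥0 with ∑_j p_j = 1. Let X₀ : Ω → ℝ be a random variable with ℙ(X₀ = c j) = p j for each j (and taking no other values), let ε : Ω → ℝ have law gaussianReal 0 1, and assume X₀ and ε are independent. Fix t ∈ (0,1] and set X_t = (1−t)·X₀ + t·ε. Define s : ℝ → ℝ by s(x) = − [∑_j p_j · (x − (1−t)·c j) · exp(−(x − (1−t)·c j)² / (2t²))] / [t² · ∑_j p_j · exp(−(x − (1−t)·c j)² / (2t²))]. Then the conditional expectation of −ε/t given the σ-algebra generated by X_t satisfies E[−ε/t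 ∣ σ(X_t)] = s(X_t) ℙ-almost surely. -/
open MeasureTheory ProbabilityTheory
open scoped NNReal ENNReal

set_option maxHeartbeats 4000000 in
/-- The score of the RectFlow noisy marginal as a conditional expectation:
if `X₀` is distributed as `∑ j, p j δ_{c j}`, `ε ∼ N(0,1)` is independent of `X₀`, and
`X_t = (1-t)X₀ + tε`, then `E[-ε/t ∣ σ(X_t)] = s(X_t)` a.s., where `s` is the
closed-form score of Equation (1). -/
theorem stmt_7 {Ω : Type*} [MeasurableSpace Ω] (P : Measure Ω) [IsProbabilityMeasure P]
    {V : ℕ} (hV : 1 ≤ V) (c : Fin V → ℝ) (p : Fin V → ℝ≥0) (hp : ∑ j, p j = 1)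
    (X₀ ε : Ω → ℝ) (hX₀ : Measurable X₀) (hε : Measurable ε)
    (hlaw₀ : ∀ j, P {ω | X₀ ω = c j} = (p j : ℝ≥0∞))
    (hsupp : ∀ ω, ∃ j, X₀ ω = c j)
    (hεlaw : Measure.map ε P = gaussianReal 0 1)
    (hindep : IndepFun X₀ ε P)
    (t : ℝ) (ht : t ∈ Set.Ioc (0 : ℝ) 1) :
    P[fun ω => -ε ω / t |
        MeasurableSpace.comap (fun ω => (1 - t) * X₀ ω + t * ε ω) inferInstance]
      =ᵐ[P]
    fun ω =>
      -(∑ j, (p j : ℝ) * (((1 - t) * X₀ ω + t * ε ω) - (1 - t) * c j) *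
            Real.exp (-(((1 - t) * X₀ ω + t * ε ω) - (1 - t) * c j) ^ 2 / (2 * t ^ 2))) /
        (t ^ 2 * ∑ j, (p j : ℝ) *
            Real.exp (-(((1 - t) * X₀ ω + t * ε ω) - (1 - t) * c j) ^ 2 / (2 * t ^ 2))) := by
  classical
  obtain ⟨ht0, ht1⟩ := ht
  have htne : t ≠ 0 := ne_of_gt ht0
  have ht2 : (0:ℝ) < t ^ 2 := by positivity
  set Y : Ω → ℝ := fun ω => (1 - t) * X₀ ω + t * ε ω with hY
  set Nf : ℝ → ℝ := fun x => ∑ j, (p j : ℝ) * (x - (1 - t) * c j) *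
      Real.exp (-(x - (1 - t) * c j) ^ 2 / (2 * t ^ 2)) with hNf
  set Df : ℝ → ℝ := fun x => ∑ j, (p j : ℝ) *
      Real.exp (-(x - (1 - t) * c j) ^ 2 / (2 * t ^ 2)) with hDf
  set s : ℝ → ℝ := fun x => -Nf x / (t ^ 2 * Df x) with hs
  show P[(fun ω => -ε ω / t) | MeasurableSpace.comap Y inferInstance]
      =ᵐ[P] fun ω => s (Y ω)
  clear_value Nf Df s
  -- basic analytic facts
  have hpj : ∃ j, p j ≠ 0 := by
    by_contra h
    push_neg at h
    simp [h] at hp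
  have hDpos : ∀ x, 0 < Df x := by
    intro x
    rw [hDf]
    obtain ⟨j, hj⟩ := hpj
    refine Finset.sum_pos' (fun i _ => by positivity) ⟨j, Finset.mem_univ j, ?_⟩
    have : (0:ℝ) < p j := by exact_mod_cast pos_iff_ne_zero.mpr hj
    positivity
  have hNcont : Continuous Nf := by rw [hNf]; fun_prop
  have hDcont : Continuous Df := by rw [hDf]; fun_prop
  have hscont : Continuous s := by
    rw [hs]
    exact hNcont.neg.div (continuous_const.mul hDcont)
      (fun x => ne_of_gt (mul_pos ht2 (hDpos x)))
  set C : ℝ := ∑ j, |(1 - t) * c j| with hC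
  clear_value C
  have hCnn : 0 ≤ C := by rw [hC]; positivity
  have hsbound : ∀ x, |s x| ≤ (|x| + C) / t ^ 2 := by
    intro x
    rw [hs]
    dsimp only
    rw [abs_div, abs_neg, abs_of_pos (mul_pos ht2 (hDpos x))]
    rw [div_le_div_iff₀ (mul_pos ht2 (hDpos x)) ht2]
    have hNb : |Nf x| ≤ (|x| + C) * Df x := by
      rw [hNf, hDf]
      refine (Finset.abs_sum_le_sum_abs _ _).trans ?_
      rw [Finset.mul_sum]
      refine Finset.sum_le_sum fun j _ => ?_
      rw [abs_mul, abs_mul, abs_of_nonneg (NNReal.coe_nonneg _),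
        abs_of_nonneg (Real.exp_pos _).le]
      have h1 : |x - (1 - t) * c j| ≤ |x| + C := by
        calc |x - (1 - t) * c j| = |x + -((1 - t) * c j)| := by rw [sub_eq_add_neg]
          _ ≤ |x| + |-((1 - t) * c j)| := abs_add_le _ _
          _ = |x| + |(1 - t) * c j| := by rw [abs_neg]
          _ ≤ |x| + C := by
              have : |(1 - t) * c j| ≤ C := by
                rw [hC]
                exact Finset.single_le_sum (f := fun i => |(1 - t) * c i|)
                  (fun i _ => abs_nonneg _) (Finset.mem_univ j)
              linarith
      calc (p j : ℝ) * |x - (1 - t) * c j|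
            * Real.exp (-(x - (1 - t) * c j) ^ 2 / (2 * t ^ 2))
          ≤ (p j : ℝ) * (|x| + C) * Real.exp (-(x - (1 - t) * c j) ^ 2 / (2 * t ^ 2)) := by
            gcongr
        _ = (|x| + C) * ((p j : ℝ) * Real.exp (-(x - (1 - t) * c j) ^ 2 / (2 * t ^ 2))) := by
            ring
    calc |Nf x| * t ^ 2 ≤ ((|x| + C) * Df x) * t ^ 2 :=
          mul_le_mul_of_nonneg_right hNb ht2.le
      _ = (|x| + C) * (t ^ 2 * Df x) := by ring
  -- measurability of Y and sigma-finiteness of trim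
  have hmY : Measurable Y := by rw [hY]; exact (measurable_const.mul hX₀).add (measurable_const.mul hε)
  haveI hfin : IsFiniteMeasure (P.trim hmY.comap_le) := by
    constructor
    rw [trim_measurableSet_eq hmY.comap_le MeasurableSet.univ]
    exact measure_lt_top P _
  -- gaussian pdf facts
  have hpdf : ∀ x : ℝ, gaussianPDFReal 0 1 x
      = (Real.sqrt (2 * Real.pi))⁻¹ * Real.exp (-2⁻¹ * x ^ 2) := by
    intro x
    simp only [gaussianPDFReal, NNReal.coe_one, mul_one, sub_zero]
    congr 1
    ring
  have hpdfm : Measurable fun x => (gaussianPDFReal 0 1 x).toNNReal :=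
    (measurable_gaussianPDFReal 0 1).real_toNNReal
  have hgauss : ∀ h : ℝ → ℝ,
      ∫ e, h e ∂(gaussianReal 0 1) = ∫ e, gaussianPDFReal 0 1 e * h e := by
    intro h
    rw [gaussianReal_of_var_ne_zero 0 one_ne_zero]
    have hpdfeq : gaussianPDF 0 1 = fun x => ((gaussianPDFReal 0 1 x).toNNReal : ℝ≥0∞) := rfl
    rw [hpdfeq, integral_withDensity_eq_integral_smul hpdfm h]
    congr 1
    funext x
    rw [NNReal.smul_def, smul_eq_mul, Real.coe_toNNReal _ (gaussianPDFReal_nonneg _ _ _)]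
  have hgaussint : ∀ (K : ℝ) (h : ℝ → ℝ), Measurable h → (∀ e, |h e| ≤ K * (|e| + 1)) →
      Integrable h (gaussianReal 0 1) := by
    intro K h hm hb
    have h1 : Integrable (fun e : ℝ => |e|) (gaussianReal 0 1) := by
      rw [gaussianReal_of_var_ne_zero 0 one_ne_zero]
      have hpdfeq : gaussianPDF 0 1 = fun x => ((gaussianPDFReal 0 1 x).toNNReal : ℝ≥0∞) := rfl
      rw [hpdfeq, integrable_withDensity_iff_integrable_smul hpdfm]
      have hint : Integrable (fun x : ℝ =>
          (Real.sqrt (2 * Real.pi))⁻¹ * |x * Real.exp (-2⁻¹ * x ^ 2)|) volume :=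
        ((integrable_mul_exp_neg_mul_sq (by norm_num : (0:ℝ) < 2⁻¹)).abs.const_mul _)
      refine hint.congr (Filter.Eventually.of_forall fun x => ?_)
      dsimp only
      rw [NNReal.smul_def, smul_eq_mul, Real.coe_toNNReal _ (gaussianPDFReal_nonneg _ _ _),
        hpdf, abs_mul, abs_of_nonneg (Real.exp_pos _).le]
      ring
    have habs : Integrable (fun e => K * (|e| + 1)) (gaussianReal 0 1) :=
      ((h1.add (integrable_const 1)).const_mul K)
    exact Integrable.mono' habs hm.aestronglyMeasurable (Filter.Eventually.of_forall hb)
  -- integrability of ε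
  have hεint : Integrable ε P := by
    have h := hgaussint 1 (fun e => e) measurable_id
      (fun e => by rw [one_mul]; exact le_add_of_nonneg_right zero_le_one |>.trans' le_rfl)
    rw [← hεlaw] at h
    exact (integrable_map_measure measurable_id.aestronglyMeasurable hε.aemeasurable).mp h
  have hX₀bdd : ∀ ω, |X₀ ω| ≤ ∑ j, |c j| := by
    intro ω
    obtain ⟨j, hj⟩ := hsupp ω
    rw [hj]
    exact Finset.single_le_sum (f := fun i => |c i|) (fun i _ => abs_nonneg _) (Finset.mem_univ j)
  have hX₀int : Integrable X₀ P := by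
    refine Integrable.mono' (integrable_const (∑ j, |c j|)) hX₀.aestronglyMeasurable ?_
    exact Filter.Eventually.of_forall hX₀bdd
  have hYint : Integrable Y P := by
    rw [hY]; exact (hX₀int.const_mul _).add (hεint.const_mul _)
  have hfint : Integrable (fun ω => -ε ω / t) P := by
    have := (hεint.neg).div_const t
    simpa using this
  have hgint : Integrable (fun ω => s (Y ω)) P := by
    refine Integrable.mono' (((hYint.abs.add (integrable_const C)).div_const (t^2)))
      ((hscont.measurable.comp hmY).aestronglyMeasurable) ?_
    exact Filter.Eventually.of_forall fun ω => hsbound (Y ω)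
  -- the fiber identity
  set D : Finset ℝ := Finset.image c Finset.univ with hD
  have hfiber : ∀ v ∈ D, ∑ j ∈ Finset.univ.filter (fun j => c j = v), (p j : ℝ)
      = (P {ω | X₀ ω = v}).toReal := by
    have hdisj : (↑D : Set ℝ).PairwiseDisjoint (fun v => {ω | X₀ ω = v}) := by
      intro u _ v _ huv
      simp only [Function.onFun, Set.disjoint_left, Set.mem_setOf_eq]
      intro ω h1 h2
      exact huv (h1 ▸ h2 ▸ rfl)
    have hmeasv : ∀ v : ℝ, MeasurableSet {ω | X₀ ω = v} := fun v =>
      hX₀ (measurableSet_singleton v)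
    have hunion : ⋃ v ∈ D, {ω | X₀ ω = v} = Set.univ := by
      ext ω
      simp only [Set.mem_iUnion, Set.mem_setOf_eq, Set.mem_univ, iff_true, exists_prop]
      obtain ⟨j, hj⟩ := hsupp ω
      exact ⟨c j, Finset.mem_image_of_mem c (Finset.mem_univ j), hj⟩
    have h1 : ∑ v ∈ D, P {ω | X₀ ω = v} = 1 := by
      rw [← measure_biUnion_finset hdisj (fun v _ => hmeasv v), hunion, measure_univ]
    have h1' : ∑ v ∈ D, (P {ω | X₀ ω = v}).toReal = 1 := by
      rw [← ENNReal.toReal_sum (fun v _ => measure_ne_top P _), h1, ENNReal.toReal_one]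
    have hle : ∀ v ∈ D, (P {ω | X₀ ω = v}).toReal
        ≤ ∑ j ∈ Finset.univ.filter (fun j => c j = v), (p j : ℝ) := by
      intro v hv
      obtain ⟨j, _, hj⟩ := Finset.mem_image.mp hv
      rw [← hj, hlaw₀ j, ENNReal.coe_toReal]
      exact Finset.single_le_sum (f := fun i => (p i : ℝ)) (fun i _ => (p i).coe_nonneg)
        (Finset.mem_filter.mpr ⟨Finset.mem_univ j, rfl⟩)
    have hsum2 : ∑ v ∈ D, ∑ j ∈ Finset.univ.filter (fun j => c j = v), (p j : ℝ) = 1 := by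
      rw [Finset.sum_fiberwise_of_maps_to
        (fun j _ => Finset.mem_image_of_mem c (Finset.mem_univ j))]
      rw [← NNReal.coe_sum, hp, NNReal.coe_one]
    intro v hv
    exact ((Finset.sum_eq_sum_iff_of_le hle).mp (by rw [h1', hsum2]) v hv).symm
  -- the splitting identity
  have key : ∀ G : ℝ → ℝ → ℝ, (∀ v, Measurable (G v)) →
      (∀ v, Integrable (G v) (gaussianReal 0 1)) →
      ∫ ω, G (X₀ ω) (ε ω) ∂P
        = ∑ j, (p j : ℝ) * ∫ e, G (c j) e ∂(gaussianReal 0 1) := by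
    intro G hGm hGi
    have hGiP : ∀ v, Integrable (fun ω => G v (ε ω)) P := by
      intro v
      have h := hGi v
      rw [← hεlaw] at h
      exact (integrable_map_measure (hGm v).aestronglyMeasurable hε.aemeasurable).mp h
    have hGP : ∀ v, ∫ ω, G v (ε ω) ∂P = ∫ e, G v e ∂(gaussianReal 0 1) := by
      intro v
      rw [← hεlaw, integral_map hε.aemeasurable (hGm v).aestronglyMeasurable]
    have hpoint : ∀ ω, G (X₀ ω) (ε ω)
        = ∑ v ∈ D, Set.indicator {ω' | X₀ ω' = v} (fun ω' => G v (ε ω')) ω := by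
      intro ω
      obtain ⟨j, hj⟩ := hsupp ω
      rw [Finset.sum_eq_single (c j)]
      · rw [Set.indicator_of_mem (show ω ∈ {ω' | X₀ ω' = c j} from hj), hj]
      · intro v _ hne
        apply Set.indicator_of_notMem
        simp only [Set.mem_setOf_eq, hj]
        exact fun h => hne h.symm
      · intro hne
        exact absurd (Finset.mem_image_of_mem c (Finset.mem_univ j)) hne
    calc ∫ ω, G (X₀ ω) (ε ω) ∂P
        = ∫ ω, ∑ v ∈ D, Set.indicator {ω' | X₀ ω' = v} (fun ω' => G v (ε ω')) ω ∂P :=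
          integral_congr_ae (Filter.Eventually.of_forall hpoint)
      _ = ∑ v ∈ D, ∫ ω, Set.indicator {ω' | X₀ ω' = v} (fun ω' => G v (ε ω')) ω ∂P := by
          refine integral_finset_sum D fun v _ => ?_
          exact (hGiP v).indicator (hX₀ (measurableSet_singleton v))
      _ = ∑ v ∈ D, (P {ω | X₀ ω = v}).toReal * ∫ e, G v e ∂(gaussianReal 0 1) := by
          refine Finset.sum_congr rfl fun v _ => ?_
          have heq : (fun ω => Set.indicator {ω' | X₀ ω' = v} (fun ω' => G v (ε ω')) ω)
              = fun ω => Set.indicator ({v} : Set ℝ) (fun _ => (1:ℝ)) (X₀ ω) * G v (ε ω) := by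
            funext ω
            by_cases h : X₀ ω = v
            · rw [Set.indicator_of_mem (show ω ∈ {ω' | X₀ ω' = v} from h),
                Set.indicator_of_mem (show X₀ ω ∈ ({v} : Set ℝ) from h), one_mul]
            · rw [Set.indicator_of_notMem (show ω ∉ {ω' | X₀ ω' = v} from h),
                Set.indicator_of_notMem (show X₀ ω ∉ ({v} : Set ℝ) from h), zero_mul]
          rw [heq]
          have hind : IndepFun (fun ω => Set.indicator ({v} : Set ℝ) (fun _ => (1:ℝ)) (X₀ ω))
              (fun ω => G v (ε ω)) P :=
            hindep.comp (measurable_const.indicator (measurableSet_singleton v)) (hGm v)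
          have hmul := hind.integral_mul_eq_mul_integral
            ((measurable_const.indicator (measurableSet_singleton v)).comp hX₀).aestronglyMeasurable
            ((hGm v).comp hε).aestronglyMeasurable
          rw [show (fun ω => Set.indicator ({v} : Set ℝ) (fun _ => (1:ℝ)) (X₀ ω) * G v (ε ω))
            = (fun ω => Set.indicator ({v} : Set ℝ) (fun _ => (1:ℝ)) (X₀ ω))
              * (fun ω => G v (ε ω)) from rfl, hmul]
          congr 1
          · have heq2 : (fun ω => Set.indicator ({v} : Set ℝ) (fun _ => (1:ℝ)) (X₀ ω))
                = Set.indicator {ω | X₀ ω = v} (fun _ => (1:ℝ)) := by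
              funext ω
              by_cases h : X₀ ω = v
              · rw [Set.indicator_of_mem (show X₀ ω ∈ ({v} : Set ℝ) from h),
                  Set.indicator_of_mem (show ω ∈ {ω' | X₀ ω' = v} from h)]
              · rw [Set.indicator_of_notMem (show X₀ ω ∉ ({v} : Set ℝ) from h),
                  Set.indicator_of_notMem (show ω ∉ {ω' | X₀ ω' = v} from h)]
            rw [heq2, integral_indicator_const (1:ℝ)
                (show MeasurableSet {ω | X₀ ω = v} from hX₀ (measurableSet_singleton v)),
              smul_eq_mul, mul_one]
            rfl
          · exact hGP v
      _ = ∑ v ∈ D, (∑ j ∈ Finset.univ.filter (fun j => c j = v), (p j : ℝ))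
            * ∫ e, G v e ∂(gaussianReal 0 1) :=
          Finset.sum_congr rfl fun v hv => by rw [hfiber v hv]
      _ = ∑ v ∈ D, ∑ j ∈ Finset.univ.filter (fun j => c j = v),
            (p j : ℝ) * ∫ e, G (c j) e ∂(gaussianReal 0 1) := by
          refine Finset.sum_congr rfl fun v _ => ?_
          rw [Finset.sum_mul]
          refine Finset.sum_congr rfl fun j hj => ?_
          rw [(Finset.mem_filter.mp hj).2]
      _ = ∑ j, (p j : ℝ) * ∫ e, G (c j) e ∂(gaussianReal 0 1) :=
          Finset.sum_fiberwise_of_maps_to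
            (fun j _ => Finset.mem_image_of_mem c (Finset.mem_univ j)) _
  refine (ae_eq_condExp_of_forall_setIntegral_eq hmY.comap_le hfint
    (fun S hS hSfin => hgint.integrableOn)
    ?_ (StronglyMeasurable.aestronglyMeasurable
        (Measurable.stronglyMeasurable
          (hscont.measurable.comp (Measurable.of_comap_le le_rfl))))).symm
  intro S hS hSfin
  obtain ⟨B, hB, rfl⟩ := hS
  set c₀ : ℝ := (Real.sqrt (2 * Real.pi))⁻¹ with hc₀
  clear_value c₀
  have hc₀nn : 0 ≤ c₀ := by rw [hc₀]; positivity
  set ind : ℝ → ℝ := Set.indicator B (fun _ => (1:ℝ)) with hind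
  have hindm : Measurable ind := measurable_const.indicator hB
  clear_value ind
  have hind1 : ∀ u, |ind u| ≤ 1 := by
    intro u
    rw [hind]
    by_cases h : u ∈ B
    · rw [Set.indicator_of_mem h]; norm_num
    · rw [Set.indicator_of_notMem h]; norm_num
  set G1 : ℝ → ℝ → ℝ := fun v e => ind ((1 - t) * v + t * e) * (-e / t) with hG1
  set G2 : ℝ → ℝ → ℝ := fun v e => ind ((1 - t) * v + t * e) * s ((1 - t) * v + t * e) with hG2
  clear_value G1 G2
  have haffm : ∀ v : ℝ, Measurable fun e : ℝ => (1 - t) * v + t * e := fun v =>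
    (measurable_id.const_mul t).const_add _
  have hG1m : ∀ v, Measurable (G1 v) := by
    intro v
    rw [hG1]
    exact (hindm.comp (haffm v)).mul (measurable_id.neg.div_const t)
  have hG2m : ∀ v, Measurable (G2 v) := by
    intro v
    rw [hG2]
    exact (hindm.comp (haffm v)).mul (hscont.measurable.comp (haffm v))
  have hG1i : ∀ v, Integrable (G1 v) (gaussianReal 0 1) := by
    intro v
    refine hgaussint t⁻¹ _ (hG1m v) fun e => ?_
    rw [hG1]
    dsimp only
    rw [abs_mul]
    calc |ind ((1 - t) * v + t * e)| * |-e / t| ≤ 1 * |-e / t| := by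
          gcongr
          exact hind1 _
      _ = |e| / t := by rw [one_mul, abs_div, abs_neg, abs_of_pos ht0]
      _ ≤ t⁻¹ * (|e| + 1) := by
          rw [div_eq_inv_mul]
          have h1 : (0:ℝ) ≤ t⁻¹ := (inv_pos.mpr ht0).le
          nlinarith [abs_nonneg e]
  have hG2i : ∀ v, Integrable (G2 v) (gaussianReal 0 1) := by
    intro v
    refine hgaussint (t⁻¹ + (|(1 - t) * v| + C) / t ^ 2) _ (hG2m v) fun e => ?_
    rw [hG2]
    dsimp only
    rw [abs_mul]
    calc |ind ((1 - t) * v + t * e)| * |s ((1 - t) * v + t * e)|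
        ≤ 1 * ((|(1 - t) * v + t * e| + C) / t ^ 2) := by
          gcongr
          · exact hind1 _
          · exact hsbound _
      _ ≤ (|(1 - t) * v| + t * |e| + C) / t ^ 2 := by
          rw [one_mul]
          gcongr
          calc |(1 - t) * v + t * e| ≤ |(1 - t) * v| + |t * e| := abs_add_le _ _
            _ = |(1 - t) * v| + t * |e| := by rw [abs_mul t e, abs_of_pos ht0]
      _ ≤ (t⁻¹ + (|(1 - t) * v| + C) / t ^ 2) * (|e| + 1) := by
          rw [div_le_iff₀ ht2]
          have heq : (t⁻¹ + (|(1 - t) * v| + C) / t ^ 2) * (|e| + 1) * t ^ 2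
              = (t + |(1 - t) * v| + C) * (|e| + 1) := by
            field_simp
            ring
          rw [heq]
          nlinarith [abs_nonneg e, abs_nonneg ((1 - t) * v), ht0, hCnn]
  -- reduce the two set integrals to integrals of G∘(X₀,ε)
  have hL : ∫ ω in Y ⁻¹' B, s (Y ω) ∂P = ∫ ω, G2 (X₀ ω) (ε ω) ∂P := by
    rw [← integral_indicator (hmY hB)]
    refine integral_congr_ae (Filter.Eventually.of_forall fun ω => ?_)
    simp only [hG2]
    by_cases h : Y ω ∈ B
    · rw [Set.indicator_of_mem (show ω ∈ Y ⁻¹' B from h), hind,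
        Set.indicator_of_mem (show (1 - t) * X₀ ω + t * ε ω ∈ B from h), one_mul]
    · rw [Set.indicator_of_notMem (show ω ∉ Y ⁻¹' B from h), hind,
        Set.indicator_of_notMem (show (1 - t) * X₀ ω + t * ε ω ∉ B from h), zero_mul]
  have hR : ∫ ω in Y ⁻¹' B, -ε ω / t ∂P = ∫ ω, G1 (X₀ ω) (ε ω) ∂P := by
    rw [← integral_indicator (hmY hB)]
    refine integral_congr_ae (Filter.Eventually.of_forall fun ω => ?_)
    simp only [hG1]
    by_cases h : Y ω ∈ B
    · rw [Set.indicator_of_mem (show ω ∈ Y ⁻¹' B from h), hind,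
        Set.indicator_of_mem (show (1 - t) * X₀ ω + t * ε ω ∈ B from h), one_mul]
    · rw [Set.indicator_of_notMem (show ω ∉ Y ⁻¹' B from h), hind,
        Set.indicator_of_notMem (show (1 - t) * X₀ ω + t * ε ω ∉ B from h), zero_mul]
  -- Lebesgue-side integrands
  set F1 : Fin V → ℝ → ℝ := fun j x => ind x * (-(x - (1 - t) * c j) / t ^ 2)
      * gaussianPDFReal 0 1 ((x - (1 - t) * c j) / t) with hF1
  set F2 : Fin V → ℝ → ℝ := fun j x => ind x * s x
      * gaussianPDFReal 0 1 ((x - (1 - t) * c j) / t) with hF2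
  clear_value F1 F2
  have hφx : ∀ (A x : ℝ), gaussianPDFReal 0 1 ((x - A) / t)
      = c₀ * Real.exp (-(x - A) ^ 2 / (2 * t ^ 2)) := by
    intro A x
    rw [hpdf, hc₀]
    congr 1
    rw [div_pow]
    field_simp
  -- change of variables identities
  have hj1 : ∀ j, ∫ e, G1 (c j) e ∂(gaussianReal 0 1) = t⁻¹ * ∫ x, F1 j x := by
    intro j
    rw [hgauss]
    have hpt : ∀ e, gaussianPDFReal 0 1 e * G1 (c j) e
        = (fun u => F1 j ((1 - t) * c j + u)) (t * e) := by
      intro e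
      simp only [hG1, hF1]
      have h1 : (1 - t) * c j + t * e - (1 - t) * c j = t * e := by ring
      rw [h1]
      have h2 : t * e / t = e := by field_simp
      rw [h2]
      have h3 : -(t * e) / t ^ 2 = -e / t := by
        field_simp
      rw [h3]
      ring
    calc ∫ e, gaussianPDFReal 0 1 e * G1 (c j) e
        = ∫ e, (fun u => F1 j ((1 - t) * c j + u)) (t * e) :=
          integral_congr_ae (Filter.Eventually.of_forall hpt)
      _ = |t⁻¹| • ∫ u, (fun u => F1 j ((1 - t) * c j + u)) u :=
          Measure.integral_comp_mul_left (fun u => F1 j ((1 - t) * c j + u)) t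
      _ = t⁻¹ * ∫ x, F1 j x := by
          rw [integral_add_left_eq_self, abs_of_pos (inv_pos.mpr ht0), smul_eq_mul]
  have hj2 : ∀ j, ∫ e, G2 (c j) e ∂(gaussianReal 0 1) = t⁻¹ * ∫ x, F2 j x := by
    intro j
    rw [hgauss]
    have hpt : ∀ e, gaussianPDFReal 0 1 e * G2 (c j) e
        = (fun u => F2 j ((1 - t) * c j + u)) (t * e) := by
      intro e
      simp only [hG2, hF2]
      have h1 : (1 - t) * c j + t * e - (1 - t) * c j = t * e := by ring
      rw [h1]
      have h2 : t * e / t = e := by field_simp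
      rw [h2]
      ring
    calc ∫ e, gaussianPDFReal 0 1 e * G2 (c j) e
        = ∫ e, (fun u => F2 j ((1 - t) * c j + u)) (t * e) :=
          integral_congr_ae (Filter.Eventually.of_forall hpt)
      _ = |t⁻¹| • ∫ u, (fun u => F2 j ((1 - t) * c j + u)) u :=
          Measure.integral_comp_mul_left (fun u => F2 j ((1 - t) * c j + u)) t
      _ = t⁻¹ * ∫ x, F2 j x := by
          rw [integral_add_left_eq_self, abs_of_pos (inv_pos.mpr ht0), smul_eq_mul]
  -- integrability of the Lebesgue integrands
  have hWint : ∀ (A k : ℝ), Integrable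
      (fun x => (|x - A| + k) * Real.exp (-(x - A) ^ 2 / (2 * t ^ 2))) volume := by
    intro A k
    have hb : (0:ℝ) < (2 * t ^ 2)⁻¹ := by positivity
    have h1 : Integrable (fun y : ℝ => |y * Real.exp (-(2 * t ^ 2)⁻¹ * y ^ 2)|) volume :=
      (integrable_mul_exp_neg_mul_sq hb).abs
    have h2 : Integrable (fun y : ℝ => k * Real.exp (-(2 * t ^ 2)⁻¹ * y ^ 2)) volume :=
      (integrable_exp_neg_mul_sq hb).const_mul k
    have h3 : Integrable (fun y : ℝ => (|y| + k) * Real.exp (-(2 * t ^ 2)⁻¹ * y ^ 2)) volume := by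
      refine (h1.add h2).congr (Filter.Eventually.of_forall fun y => ?_)
      simp only [Pi.add_apply]
      rw [abs_mul, abs_of_nonneg (Real.exp_pos _).le]
      ring
    refine (h3.comp_sub_right A).congr (Filter.Eventually.of_forall fun x => ?_)
    dsimp only
    congr 2
    ring
  have hF1int : ∀ j, Integrable (F1 j) volume := by
    intro j
    refine Integrable.mono' (((hWint ((1 - t) * c j) 0).const_mul (c₀ / t ^ 2)))
      ?_ (Filter.Eventually.of_forall fun x => ?_)
    · apply Measurable.aestronglyMeasurable
      rw [hF1]
      exact ((hindm.mul ((measurable_id.sub_const _).neg.div_const _)).mul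
        ((measurable_gaussianPDFReal 0 1).comp
          ((measurable_id.sub_const _).div_const t)))
    · rw [Real.norm_eq_abs, hF1]
      dsimp only
      rw [hφx, abs_mul, abs_mul, abs_of_nonneg (mul_nonneg hc₀nn (Real.exp_pos _).le)]
      calc |ind x| * |-(x - (1 - t) * c j) / t ^ 2|
            * (c₀ * Real.exp (-(x - (1 - t) * c j) ^ 2 / (2 * t ^ 2)))
          ≤ 1 * (|x - (1 - t) * c j| / t ^ 2)
            * (c₀ * Real.exp (-(x - (1 - t) * c j) ^ 2 / (2 * t ^ 2))) := by
            gcongr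
            · exact hind1 _
            · rw [abs_div, abs_neg, abs_of_pos ht2]
        _ = c₀ / t ^ 2 * ((|x - (1 - t) * c j| + 0)
            * Real.exp (-(x - (1 - t) * c j) ^ 2 / (2 * t ^ 2))) := by ring
  have hF2int : ∀ j, Integrable (F2 j) volume := by
    intro j
    refine Integrable.mono'
      (((hWint ((1 - t) * c j) (|(1 - t) * c j| + C)).const_mul (c₀ / t ^ 2)))
      ?_ (Filter.Eventually.of_forall fun x => ?_)
    · apply Measurable.aestronglyMeasurable
      rw [hF2]
      exact ((hindm.mul hscont.measurable).mul
        ((measurable_gaussianPDFReal 0 1).comp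
          ((measurable_id.sub_const _).div_const t)))
    · rw [Real.norm_eq_abs, hF2]
      dsimp only
      rw [hφx, abs_mul, abs_mul, abs_of_nonneg (mul_nonneg hc₀nn (Real.exp_pos _).le)]
      have hxabs : |x| ≤ |x - (1 - t) * c j| + |(1 - t) * c j| := by
        calc |x| = |(x - (1 - t) * c j) + (1 - t) * c j| := by ring_nf
          _ ≤ |x - (1 - t) * c j| + |(1 - t) * c j| := abs_add_le _ _
      calc |ind x| * |s x| * (c₀ * Real.exp (-(x - (1 - t) * c j) ^ 2 / (2 * t ^ 2)))
          ≤ 1 * ((|x - (1 - t) * c j| + (|(1 - t) * c j| + C)) / t ^ 2)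
            * (c₀ * Real.exp (-(x - (1 - t) * c j) ^ 2 / (2 * t ^ 2))) := by
            gcongr
            · exact hind1 _
            · refine (hsbound x).trans ?_
              gcongr ?_ / _
              linarith
        _ = c₀ / t ^ 2 * ((|x - (1 - t) * c j| + (|(1 - t) * c j| + C))
            * Real.exp (-(x - (1 - t) * c j) ^ 2 / (2 * t ^ 2))) := by ring
  -- pointwise identity between the mixture integrands
  have hkeypt : ∀ x, s x * Df x = -Nf x / t ^ 2 := by
    intro x
    rw [hs]
    dsimp only
    rw [div_mul_eq_mul_div, div_eq_div_iff (mul_pos ht2 (hDpos x)).ne' ht2.ne']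
    ring
  have hpointwise : ∀ x, ∑ j, (p j : ℝ) * t⁻¹ * F2 j x
      = ∑ j, (p j : ℝ) * t⁻¹ * F1 j x := by
    intro x
    simp only [hF1, hF2, hφx]
    have eL : ∑ j, (p j : ℝ) * t⁻¹ * (ind x * s x
          * (c₀ * Real.exp (-(x - (1 - t) * c j) ^ 2 / (2 * t ^ 2))))
        = (t⁻¹ * c₀ * ind x * s x) * Df x := by
      simp only [hDf]
      rw [Finset.mul_sum]
      exact Finset.sum_congr rfl fun j _ => by ring
    have eR : ∑ j, (p j : ℝ) * t⁻¹ * (ind x * (-(x - (1 - t) * c j) / t ^ 2)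
          * (c₀ * Real.exp (-(x - (1 - t) * c j) ^ 2 / (2 * t ^ 2))))
        = (t⁻¹ * c₀ * ind x) * (-Nf x / t ^ 2) := by
      simp only [hNf, neg_div, Finset.sum_div, mul_neg, Finset.mul_sum]
      rw [← Finset.sum_neg_distrib]
      exact Finset.sum_congr rfl fun j _ => by ring
    rw [eL, eR]
    rw [show (t⁻¹ * c₀ * ind x * s x) * Df x = (t⁻¹ * c₀ * ind x) * (s x * Df x) by ring,
      hkeypt x]
  -- final chain
  calc ∫ ω in Y ⁻¹' B, s (Y ω) ∂P
      = ∫ ω, G2 (X₀ ω) (ε ω) ∂P := hL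
    _ = ∑ j, (p j : ℝ) * ∫ e, G2 (c j) e ∂(gaussianReal 0 1) := key G2 hG2m hG2i
    _ = ∑ j, ∫ x, (p j : ℝ) * t⁻¹ * F2 j x := by
        refine Finset.sum_congr rfl fun j _ => ?_
        rw [hj2 j, ← mul_assoc, ← integral_const_mul]
    _ = ∫ x, ∑ j, (p j : ℝ) * t⁻¹ * F2 j x :=
        (integral_finset_sum _ fun j _ => (hF2int j).const_mul _).symm
    _ = ∫ x, ∑ j, (p j : ℝ) * t⁻¹ * F1 j x :=
        integral_congr_ae (Filter.Eventually.of_forall hpointwise)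
    _ = ∑ j, ∫ x, (p j : ℝ) * t⁻¹ * F1 j x :=
        integral_finset_sum _ fun j _ => (hF1int j).const_mul _
    _ = ∑ j, (p j : ℝ) * ∫ e, G1 (c j) e ∂(gaussianReal 0 1) := by
        refine Finset.sum_congr rfl fun j _ => ?_
        rw [hj1 j, ← mul_assoc, ← integral_const_mul]
    _ = ∫ ω, G1 (X₀ ω) (ε ω) ∂P := (key G1 hG1m hG1i).symm
    _ = ∫ ω in Y ⁻¹' B, -ε ω / t ∂P := hR.symm
end

section
/- Let (Ω, ℙ) be a probability space, V ≥ 1, c : Fin V → ℝ, and p : Fin V → ℝ≥0 with ∑_j p_j = 1. Let X₀ : Ω → ℝ be a random variable with ℙ(X₀ = c j) = p j for each j (and taking no other values), let ε : Ω → ℝ have law gaussianReal 0 1, and assume X₀ and ε are independent. Fix t ∈ (0,1] and set X_t = (1−t)·X₀ + t·ε. Then ℙ-almost surely, E[X₀ ∣ σ(X_t)] = [∑_j p_j · (c j) · exp(−(X_t − (1−t)·c j)² / (2t²))] / [∑_j p_j · exp(−(X_t − (1−t)·c j)² / (2t²))]. -/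
open MeasureTheory ProbabilityTheory Real
open scoped NNReal ENNReal

noncomputable def auxN {V : ℕ} (c : Fin V → ℝ) (p : Fin V → ℝ≥0) (t : ℝ) (x : ℝ) : ℝ :=
  ∑ j, (p j : ℝ) * c j * Real.exp (-(x - (1 - t) * c j) ^ 2 / (2 * t ^ 2))

noncomputable def auxD {V : ℕ} (c : Fin V → ℝ) (p : Fin V → ℝ≥0) (t : ℝ) (x : ℝ) : ℝ :=
  ∑ j, (p j : ℝ) * Real.exp (-(x - (1 - t) * c j) ^ 2 / (2 * t ^ 2))

noncomputable def auxF {V : ℕ} (c : Fin V → ℝ) (p : Fin V → ℝ≥0) (t : ℝ) (x : ℝ) : ℝ :=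
  auxN c p t x / auxD c p t x

section basic
variable {V : ℕ} (c : Fin V → ℝ) (p : Fin V → ℝ≥0) (t : ℝ)

lemma auxN_cont : Continuous (auxN c p t) := by
  unfold auxN
  refine continuous_finset_sum _ fun j _ => Continuous.mul continuous_const ?_
  exact Real.continuous_exp.comp
    ((((continuous_id.sub continuous_const).pow 2).neg).div_const _)

lemma auxD_cont : Continuous (auxD c p t) := by
  unfold auxD
  refine continuous_finset_sum _ fun j _ => Continuous.mul continuous_const ?_
  exact Real.continuous_exp.comp
    ((((continuous_id.sub continuous_const).pow 2).neg).div_const _)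

lemma auxF_meas : Measurable (auxF c p t) :=
  ((auxN_cont c p t).measurable).div ((auxD_cont c p t).measurable)

lemma auxD_pos (hp : ∑ j, p j = 1) (x : ℝ) : 0 < auxD c p t x := by
  have hpex : ∃ j, p j ≠ 0 := by
    by_contra h
    push_neg at h
    simp [h] at hp
  obtain ⟨j₀, hj₀⟩ := hpex
  refine Finset.sum_pos' (fun j _ => mul_nonneg (p j).coe_nonneg (Real.exp_pos _).le)
    ⟨j₀, Finset.mem_univ _, mul_pos ?_ (Real.exp_pos _)⟩
  exact_mod_cast pos_iff_ne_zero.2 hj₀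

lemma auxF_bound (hp : ∑ j, p j = 1) (x : ℝ) : |auxF c p t x| ≤ ∑ j, |c j| := by
  have hD := auxD_pos c p t hp x
  rw [auxF, abs_div, abs_of_pos hD, div_le_iff₀ hD]
  calc |auxN c p t x| ≤ ∑ j, |(p j : ℝ) * c j * Real.exp (-(x - (1 - t) * c j) ^ 2 / (2 * t ^ 2))| :=
        Finset.abs_sum_le_sum_abs _ _
    _ = ∑ j, |c j| * ((p j : ℝ) * Real.exp (-(x - (1 - t) * c j) ^ 2 / (2 * t ^ 2))) := by
        refine Finset.sum_congr rfl fun j _ => ?_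
        rw [abs_mul, abs_mul, abs_of_nonneg (p j).coe_nonneg, abs_of_pos (Real.exp_pos _)]
        ring
    _ ≤ ∑ j, |c j| * auxD c p t x := by
        refine Finset.sum_le_sum fun j _ => mul_le_mul_of_nonneg_left ?_ (abs_nonneg _)
        exact Finset.single_le_sum
          (f := fun j => (p j : ℝ) * Real.exp (-(x - (1 - t) * c j) ^ 2 / (2 * t ^ 2)))
          (fun j _ => mul_nonneg (p j).coe_nonneg (Real.exp_pos _).le) (Finset.mem_univ j)
    _ = (∑ j, |c j|) * auxD c p t x := by rw [← Finset.sum_mul]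

end basic

lemma law_aux {Ω : Type*} [MeasurableSpace Ω] (P : Measure Ω) [IsProbabilityMeasure P]
    {V : ℕ} (c : Fin V → ℝ) (p : Fin V → ℝ≥0) (hp : ∑ j, p j = 1)
    (X₀ : Ω → ℝ) (hX₀ : Measurable X₀)
    (hlaw₀ : ∀ j, P {ω | X₀ ω = c j} = (p j : ℝ≥0∞))
    (hsupp : ∀ ω, ∃ j, X₀ ω = c j) :
    P.map X₀ = ∑ j, (p j : ℝ≥0∞) • Measure.dirac (c j) := by
  classical
  have hub : ∀ (A : Set ℝ) (s : Finset (Fin V)), (∀ j, c j ∈ A → j ∈ s) →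
      P (X₀ ⁻¹' A) ≤ ∑ j ∈ s, (p j : ℝ≥0∞) := by
    intro A s hs
    have hsub : X₀ ⁻¹' A ⊆ ⋃ j ∈ s, {ω | X₀ ω = c j} := by
      intro ω hω
      obtain ⟨j, hj⟩ := hsupp ω
      exact Set.mem_biUnion (hs j (by rw [← hj]; exact hω)) hj
    calc P (X₀ ⁻¹' A) ≤ P (⋃ j ∈ s, {ω | X₀ ω = c j}) := measure_mono hsub
      _ ≤ ∑ j ∈ s, P {ω | X₀ ω = c j} := measure_biUnion_finset_le _ _
      _ = _ := Finset.sum_congr rfl fun j _ => hlaw₀ j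
  have hne : ∀ s : Finset (Fin V), (∑ j ∈ s, (p j : ℝ≥0∞)) ≠ ∞ := by
    intro s; rw [← ENNReal.coe_finset_sum]; exact ENNReal.coe_ne_top
  have key : ∀ A : Set ℝ, MeasurableSet A →
      P (X₀ ⁻¹' A) = ∑ j ∈ Finset.univ.filter (fun j => c j ∈ A), (p j : ℝ≥0∞) := by
    intro A hA
    set s : Finset (Fin V) := Finset.univ.filter (fun j => c j ∈ A) with hs_def
    have hmem : ∀ j, c j ∈ A → j ∈ s := fun j hj =>
      Finset.mem_filter.2 ⟨Finset.mem_univ _, hj⟩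
    have hmemc : ∀ j, c j ∈ Aᶜ → j ∈ sᶜ := by
      intro j hj
      simp only [Finset.mem_compl, hs_def, Finset.mem_filter, Finset.mem_univ, true_and]
      exact hj
    refine le_antisymm (hub A s hmem) ?_
    have hfull : (∑ j ∈ s, (p j : ℝ≥0∞)) + ∑ j ∈ sᶜ, (p j : ℝ≥0∞) = 1 := by
      rw [Finset.sum_add_sum_compl, ← ENNReal.coe_finset_sum, hp, ENNReal.coe_one]
    have hcomplm : P (X₀ ⁻¹' Aᶜ) = 1 - P (X₀ ⁻¹' A) := by
      rw [Set.preimage_compl]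
      exact prob_compl_eq_one_sub (hX₀ hA)
    calc (∑ j ∈ s, (p j : ℝ≥0∞))
        = 1 - ∑ j ∈ sᶜ, (p j : ℝ≥0∞) := ENNReal.eq_sub_of_add_eq (hne sᶜ) hfull
      _ ≤ 1 - P (X₀ ⁻¹' Aᶜ) := tsub_le_tsub_left (hub Aᶜ sᶜ hmemc) 1
      _ = 1 - (1 - P (X₀ ⁻¹' A)) := by rw [hcomplm]
      _ = P (X₀ ⁻¹' A) := ENNReal.sub_sub_cancel ENNReal.one_ne_top prob_le_one
  refine Measure.ext fun A hA => ?_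
  rw [Measure.map_apply hX₀ hA, Measure.finset_sum_apply, key A hA]
  refine (Finset.sum_filter _ _).trans (Finset.sum_congr rfl fun j _ => ?_)
  rw [Measure.smul_apply, Measure.dirac_apply' _ hA, smul_eq_mul]
  by_cases h : c j ∈ A <;> simp [Set.indicator_apply, h]

section gauss
variable {t : ℝ}

lemma gauss_map_aux (ht : t ≠ 0) (y : ℝ) :
    (gaussianReal 0 1).map (fun b => y + t * b)
      = gaussianReal y (⟨t ^ 2, sq_nonneg t⟩ : ℝ≥0) := by
  have h1 : (gaussianReal 0 1).map (fun b => t * b)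
      = gaussianReal 0 (⟨t ^ 2, sq_nonneg t⟩ : ℝ≥0) := by
    have := gaussianReal_map_const_mul (μ := 0) (v := 1) t
    simp only [mul_zero, mul_one] at this
    exact this
  have hcomp : (fun x => y + x) ∘ (fun b => t * b) = fun b => y + t * b := rfl
  rw [← hcomp, ← Measure.map_map (measurable_const_add y) (measurable_const_mul t), h1]
  exact (gaussianReal_map_const_add y).trans (congrArg (fun m => gaussianReal m _) (zero_add y))

lemma gauss_setIntegral (ht : t ≠ 0) (y : ℝ) {A : Set ℝ} (hA : MeasurableSet A) (h : ℝ → ℝ) :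
    ∫ x in A, h x ∂(gaussianReal y (⟨t ^ 2, sq_nonneg t⟩ : ℝ≥0))
      = ∫ x in A, gaussianPDFReal y (⟨t ^ 2, sq_nonneg t⟩ : ℝ≥0) x * h x := by
  have hv0 : (⟨t ^ 2, sq_nonneg t⟩ : ℝ≥0) ≠ 0 := by
    intro hcon
    apply pow_ne_zero 2 ht
    have := congrArg (fun x : ℝ≥0 => (x : ℝ)) hcon
    exact this
  rw [gaussianReal_of_var_ne_zero _ hv0]
  have hpdf : gaussianPDF y (⟨t ^ 2, sq_nonneg t⟩ : ℝ≥0)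
      = fun x => ((Real.toNNReal (gaussianPDFReal y (⟨t ^ 2, sq_nonneg t⟩ : ℝ≥0) x) : ℝ≥0) : ℝ≥0∞) :=
    rfl
  rw [hpdf]
  erw [setIntegral_withDensity_eq_setIntegral_smul
      ((measurable_gaussianPDFReal _ _).real_toNNReal) _ hA]
  refine integral_congr_ae (ae_of_all _ fun x => ?_)
  show (gaussianPDFReal y (⟨t ^ 2, sq_nonneg t⟩ : ℝ≥0) x).toNNReal • h x = _
  erw [NNReal.smul_def, Real.coe_toNNReal _ (gaussianPDFReal_nonneg _ _ _)]
  rfl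

end gauss

lemma nu_prob {V : ℕ} (c : Fin V → ℝ) (p : Fin V → ℝ≥0) (hp : ∑ j, p j = 1) :
    IsProbabilityMeasure (∑ j, (p j : ℝ≥0∞) • Measure.dirac (c j)) := by
  constructor
  rw [Measure.finset_sum_apply]
  simp only [Measure.smul_apply, measure_univ, smul_eq_mul, mul_one]
  rw [← ENNReal.coe_finset_sum, hp, ENNReal.coe_one]

lemma sum_dirac_prod_integral
    {V : ℕ} (c : Fin V → ℝ) (p : Fin V → ℝ≥0) (hp : ∑ j, p j = 1)
    (t : ℝ) {A : Set ℝ} (hA : MeasurableSet A)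
    (F : ℝ × ℝ → ℝ) (hF : Measurable F) (C : ℝ) (hC : ∀ q, ‖F q‖ ≤ C) :
    ∫ q in ((fun q : ℝ × ℝ => (1 - t) * q.1 + t * q.2) ⁻¹' A),
        F q ∂((∑ j, (p j : ℝ≥0∞) • Measure.dirac (c j)).prod (gaussianReal 0 1))
      = ∑ j, (p j : ℝ) *
          ∫ b in (fun b => (1 - t) * c j + t * b) ⁻¹' A, F (c j, b) ∂(gaussianReal 0 1) := by
  haveI := nu_prob c p hp
  have hL : Measurable (fun q : ℝ × ℝ => (1 - t) * q.1 + t * q.2) :=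
    (measurable_fst.const_mul _).add (measurable_snd.const_mul _)
  have hA' : MeasurableSet ((fun q : ℝ × ℝ => (1 - t) * q.1 + t * q.2) ⁻¹' A) := hL hA
  rw [← integral_indicator hA']
  set F' : ℝ × ℝ → ℝ :=
    Set.indicator ((fun q : ℝ × ℝ => (1 - t) * q.1 + t * q.2) ⁻¹' A) F with hF'_def
  have hF'sm : StronglyMeasurable F' := (hF.indicator hA').stronglyMeasurable
  have hC0 : 0 ≤ C := le_trans (norm_nonneg _) (hC (0, 0))
  have hF'b : ∀ q, ‖F' q‖ ≤ C := by
    intro q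
    rw [hF'_def]
    by_cases hq : q ∈ (fun q : ℝ × ℝ => (1 - t) * q.1 + t * q.2) ⁻¹' A
    · rw [Set.indicator_of_mem hq]; exact hC q
    · rw [Set.indicator_of_notMem hq]; simpa using hC0
  have hint : Integrable F' ((∑ j, (p j : ℝ≥0∞) • Measure.dirac (c j)).prod (gaussianReal 0 1)) :=
    ⟨hF'sm.aestronglyMeasurable, HasFiniteIntegral.of_bounded (ae_of_all _ hF'b)⟩
  rw [MeasureTheory.integral_prod _ hint]
  have hinner : ∀ j : Fin V,
      Integrable (fun a => ∫ b, F' (a, b) ∂(gaussianReal 0 1))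
        ((p j : ℝ≥0∞) • Measure.dirac (c j)) := by
    intro j
    haveI : IsFiniteMeasure ((p j : ℝ≥0∞) • Measure.dirac (c j)) := by
      constructor
      simp only [Measure.smul_apply, measure_univ, smul_eq_mul, mul_one]
      exact ENNReal.coe_lt_top
    refine ⟨hF'sm.integral_prod_right'.aestronglyMeasurable,
      HasFiniteIntegral.of_bounded (C := C) (ae_of_all _ fun a => ?_)⟩
    calc ‖∫ b, F' (a, b) ∂(gaussianReal 0 1)‖
        ≤ C * ((gaussianReal 0 1) Set.univ).toReal :=
          norm_integral_le_of_norm_le_const (ae_of_all _ fun b => hF'b (a, b))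
      _ = C := by simp
  rw [integral_finset_sum_measure fun j _ => hinner j]
  refine Finset.sum_congr rfl fun j _ => ?_
  rw [integral_smul_measure, integral_dirac]
  have hind : (fun b => F' (c j, b))
      = Set.indicator ((fun b => (1 - t) * c j + t * b) ⁻¹' A) (fun b => F (c j, b)) := by
    funext b
    by_cases hb : (1 - t) * c j + t * b ∈ A
    · rw [hF'_def, Set.indicator_of_mem (by exact hb), Set.indicator_of_mem (by exact hb)]
    · rw [hF'_def, Set.indicator_of_notMem (by exact hb), Set.indicator_of_notMem (by exact hb)]
  have hS : MeasurableSet ((fun b => (1 - t) * c j + t * b) ⁻¹' A) :=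
    ((measurable_const_mul t).const_add _) hA
  rw [hind, integral_indicator hS]
  simp [smul_eq_mul]

lemma gauss_push {t : ℝ} (ht : t ≠ 0) (y : ℝ) {A : Set ℝ} (hA : MeasurableSet A)
    (h : ℝ → ℝ) (hh : Measurable h) :
    ∫ b in (fun b => y + t * b) ⁻¹' A, h (y + t * b) ∂(gaussianReal 0 1)
      = ∫ x in A, gaussianPDFReal y (⟨t ^ 2, sq_nonneg t⟩ : ℝ≥0) x * h x := by
  have hℓ : Measurable fun b : ℝ => y + t * b := (measurable_const_mul t).const_add y
  rw [← gauss_setIntegral ht y hA h, ← gauss_map_aux ht y,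
    setIntegral_map hA ?_ hℓ.aemeasurable]
  rw [gauss_map_aux ht y]
  exact hh.aestronglyMeasurable

lemma pointwise_id {V : ℕ} (c : Fin V → ℝ) (p : Fin V → ℝ≥0) (hp : ∑ j, p j = 1)
    {t : ℝ} (ht : t ≠ 0) (x : ℝ) :
    ∑ j, (p j : ℝ) * (gaussianPDFReal ((1 - t) * c j) (⟨t ^ 2, sq_nonneg t⟩ : ℝ≥0) x
        * auxF c p t x)
      = ∑ j, (p j : ℝ) * (gaussianPDFReal ((1 - t) * c j) (⟨t ^ 2, sq_nonneg t⟩ : ℝ≥0) x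
        * c j) := by
  set K : ℝ := (Real.sqrt (2 * π * t ^ 2))⁻¹ with hK
  have hpdf : ∀ j : Fin V, gaussianPDFReal ((1 - t) * c j) (⟨t ^ 2, sq_nonneg t⟩ : ℝ≥0) x
      = K * Real.exp (-(x - (1 - t) * c j) ^ 2 / (2 * t ^ 2)) := fun j => rfl
  have hD := auxD_pos c p t hp x
  calc ∑ j, (p j : ℝ) * (gaussianPDFReal ((1 - t) * c j) (⟨t ^ 2, sq_nonneg t⟩ : ℝ≥0) x
        * auxF c p t x)
      = K * auxF c p t x * auxD c p t x := by
        rw [auxD, Finset.mul_sum]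
        exact Finset.sum_congr rfl fun j _ => by rw [hpdf j]; ring
    _ = K * auxN c p t x := by
        rw [mul_assoc, auxF, div_mul_cancel₀ _ (ne_of_gt hD)]
    _ = ∑ j, (p j : ℝ) * (gaussianPDFReal ((1 - t) * c j) (⟨t ^ 2, sq_nonneg t⟩ : ℝ≥0) x
        * c j) := by
        rw [auxN, Finset.mul_sum]
        exact Finset.sum_congr rfl fun j _ => by rw [hpdf j]; ring
/-- Posterior mean under Gaussian noise (Appendix A of the paper): if `X₀` is distributed
as `∑ j, p j δ_{c j}`, `ε ∼ N(0,1)` is independent of `X₀`, and `X_t = (1-t)X₀ + tε`,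
then a.s. `E[X₀ ∣ σ(X_t)]` equals the likelihood-weighted average of the codebook values. -/
theorem stmt_8 {Ω : Type*} [MeasurableSpace Ω] (P : Measure Ω) [IsProbabilityMeasure P]
    {V : ℕ} (hV : 1 ≤ V) (c : Fin V → ℝ) (p : Fin V → ℝ≥0) (hp : ∑ j, p j = 1)
    (X₀ ε : Ω → ℝ) (hX₀ : Measurable X₀) (hε : Measurable ε)
    (hlaw₀ : ∀ j, P {ω | X₀ ω = c j} = (p j : ℝ≥0∞))
    (hsupp : ∀ ω, ∃ j, X₀ ω = c j)
    (hεlaw : Measure.map ε P = gaussianReal 0 1)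
    (hindep : IndepFun X₀ ε P)
    (t : ℝ) (ht : t ∈ Set.Ioc (0 : ℝ) 1) :
    P[X₀ | MeasurableSpace.comap (fun ω => (1 - t) * X₀ ω + t * ε ω) inferInstance]
      =ᵐ[P]
    fun ω =>
      (∑ j, (p j : ℝ) * c j *
          Real.exp (-(((1 - t) * X₀ ω + t * ε ω) - (1 - t) * c j) ^ 2 / (2 * t ^ 2))) /
        (∑ j, (p j : ℝ) *
          Real.exp (-(((1 - t) * X₀ ω + t * ε ω) - (1 - t) * c j) ^ 2 / (2 * t ^ 2))) := by
  obtain ⟨ht0, ht1⟩ := ht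
  have htne : t ≠ 0 := ne_of_gt ht0
  have hXt : Measurable fun ω => (1 - t) * X₀ ω + t * ε ω :=
    (hX₀.const_mul _).add (hε.const_mul _)
  have hm : MeasurableSpace.comap (fun ω => (1 - t) * X₀ ω + t * ε ω) inferInstance
      ≤ (inferInstance : MeasurableSpace Ω) := hXt.comap_le
  haveI : SigmaFinite (P.trim hm) := by infer_instance
  set B : ℝ := ∑ j, |c j| with hB_def
  have hB0 : 0 ≤ B := Finset.sum_nonneg fun j _ => abs_nonneg _
  have hcB : ∀ j, |c j| ≤ B := fun j =>
    Finset.single_le_sum (f := fun j => |c j|) (fun j _ => abs_nonneg _) (Finset.mem_univ j)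
  have hX₀B : ∀ ω, ‖X₀ ω‖ ≤ B := by
    intro ω
    obtain ⟨j, hj⟩ := hsupp ω
    rw [Real.norm_eq_abs, hj]
    exact hcB j
  have hX₀int : Integrable X₀ P :=
    ⟨hX₀.aestronglyMeasurable, HasFiniteIntegral.of_bounded (ae_of_all _ hX₀B)⟩
  have hgmeas : Measurable fun ω => auxF c p t ((1 - t) * X₀ ω + t * ε ω) :=
    (auxF_meas c p t).comp hXt
  have hgB : ∀ ω, ‖auxF c p t ((1 - t) * X₀ ω + t * ε ω)‖ ≤ B := fun ω => by
    rw [Real.norm_eq_abs]; exact auxF_bound c p t hp _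
  have hgint : Integrable (fun ω => auxF c p t ((1 - t) * X₀ ω + t * ε ω)) P :=
    ⟨hgmeas.aestronglyMeasurable, HasFiniteIntegral.of_bounded (ae_of_all _ hgB)⟩
  have hAESM : AEStronglyMeasurable[
      MeasurableSpace.comap (fun ω => (1 - t) * X₀ ω + t * ε ω) inferInstance]
      (fun ω => auxF c p t ((1 - t) * X₀ ω + t * ε ω)) P := by
    have hXtm : Measurable[MeasurableSpace.comap
        (fun ω => (1 - t) * X₀ ω + t * ε ω) inferInstance]
        (fun ω => (1 - t) * X₀ ω + t * ε ω) := Measurable.of_comap_le le_rfl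
    exact (((auxF_meas c p t).comp hXtm).stronglyMeasurable).aestronglyMeasurable
  have hpair : P.map (fun ω => (X₀ ω, ε ω))
      = (∑ j, (p j : ℝ≥0∞) • Measure.dirac (c j)).prod (gaussianReal 0 1) := by
    rw [(indepFun_iff_map_prod_eq_prod_map_map hX₀.aemeasurable hε.aemeasurable).mp hindep,
      law_aux P c p hp X₀ hX₀ hlaw₀ hsupp, hεlaw]
  have hL : Measurable (fun q : ℝ × ℝ => (1 - t) * q.1 + t * q.2) :=
    (measurable_fst.const_mul _).add (measurable_snd.const_mul _)
  have hg_eq : ∀ s : Set Ω,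
      MeasurableSet[MeasurableSpace.comap (fun ω => (1 - t) * X₀ ω + t * ε ω) inferInstance] s
      → P s < ∞ →
      ∫ x in s, auxF c p t ((1 - t) * X₀ x + t * ε x) ∂P = ∫ x in s, X₀ x ∂P := by
    rintro s ⟨A, hA, rfl⟩ -
    have main : ∀ F : ℝ × ℝ → ℝ, Measurable F → ∀ C : ℝ, (∀ q, ‖F q‖ ≤ C) →
        ∫ ω in (fun ω => (1 - t) * X₀ ω + t * ε ω) ⁻¹' A, F (X₀ ω, ε ω) ∂P
          = ∑ j, (p j : ℝ) *
              ∫ b in (fun b => (1 - t) * c j + t * b) ⁻¹' A, F (c j, b)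
                ∂(gaussianReal 0 1) := by
      intro F hF C hC
      have hA' : MeasurableSet ((fun q : ℝ × ℝ => (1 - t) * q.1 + t * q.2) ⁻¹' A) := hL hA
      have hpre : (fun ω => (1 - t) * X₀ ω + t * ε ω) ⁻¹' A
          = (fun ω => (X₀ ω, ε ω)) ⁻¹'
              ((fun q : ℝ × ℝ => (1 - t) * q.1 + t * q.2) ⁻¹' A) := rfl
      rw [hpre, ← setIntegral_map hA' hF.aestronglyMeasurable
        (hX₀.prodMk hε).aemeasurable, hpair]
      exact sum_dirac_prod_integral c p hp t hA F hF C hC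
    have hclampm : Measurable fun q : ℝ × ℝ => max (-B) (min B q.1) :=
      measurable_const.max (measurable_const.min measurable_fst)
    have hclampB : ∀ q : ℝ × ℝ, ‖max (-B) (min B q.1)‖ ≤ B := by
      intro q
      rw [Real.norm_eq_abs, abs_le]
      refine ⟨le_max_left _ _, max_le (by linarith) (min_le_left _ _)⟩
    have e1 := main (fun q => max (-B) (min B q.1)) hclampm B hclampB
    have e2 := main (fun q => auxF c p t ((1 - t) * q.1 + t * q.2))
      ((auxF_meas c p t).comp hL) B
      (fun q => by rw [Real.norm_eq_abs]; exact auxF_bound c p t hp _)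
    have e1' : ∫ ω in (fun ω => (1 - t) * X₀ ω + t * ε ω) ⁻¹' A, X₀ ω ∂P
        = ∑ j, (p j : ℝ) *
            ∫ b in (fun b => (1 - t) * c j + t * b) ⁻¹' A, c j ∂(gaussianReal 0 1) := by
      have lhs_eq : ∫ ω in (fun ω => (1 - t) * X₀ ω + t * ε ω) ⁻¹' A, X₀ ω ∂P
          = ∫ ω in (fun ω => (1 - t) * X₀ ω + t * ε ω) ⁻¹' A,
              max (-B) (min B (X₀ ω)) ∂P := by
        refine integral_congr_ae (ae_of_all _ fun ω => ?_)
        have h := abs_le.1 (hX₀B ω)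
        show X₀ ω = max (-B) (min B (X₀ ω))
        rw [min_eq_right h.2, max_eq_right h.1]
      refine lhs_eq.trans (e1.trans (Finset.sum_congr rfl fun j _ => ?_))
      refine congrArg (fun z => (p j : ℝ) * z) (integral_congr_ae (ae_of_all _ fun b => ?_))
      have h := abs_le.1 (hcB j)
      show max (-B) (min B (c j)) = c j
      rw [min_eq_right h.2, max_eq_right h.1]
    have hpdfint : ∀ j : Fin V,
        Integrable (fun x => gaussianPDFReal ((1 - t) * c j) (⟨t ^ 2, sq_nonneg t⟩ : ℝ≥0) x)
          (volume.restrict A) := fun j => (integrable_gaussianPDFReal _ _).restrict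
    have intf : ∀ j : Fin V, Integrable
        (fun x => (p j : ℝ) * (gaussianPDFReal ((1 - t) * c j) (⟨t ^ 2, sq_nonneg t⟩ : ℝ≥0) x
          * auxF c p t x)) (volume.restrict A) := by
      intro j
      have h1 : Integrable (fun x => auxF c p t x *
          gaussianPDFReal ((1 - t) * c j) (⟨t ^ 2, sq_nonneg t⟩ : ℝ≥0) x)
          (volume.restrict A) :=
        (hpdfint j).bdd_mul (auxF_meas c p t).aestronglyMeasurable
          (ae_of_all _ fun x => by rw [Real.norm_eq_abs]; exact auxF_bound c p t hp x)
      exact (h1.congr (ae_of_all _ fun x => mul_comm _ _)).const_mul _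
    have intc : ∀ j : Fin V, Integrable
        (fun x => (p j : ℝ) * (gaussianPDFReal ((1 - t) * c j) (⟨t ^ 2, sq_nonneg t⟩ : ℝ≥0) x
          * c j)) (volume.restrict A) :=
      fun j => ((hpdfint j).mul_const _).const_mul _
    calc ∫ x in (fun ω => (1 - t) * X₀ ω + t * ε ω) ⁻¹' A,
          auxF c p t ((1 - t) * X₀ x + t * ε x) ∂P
        = ∑ j, (p j : ℝ) * ∫ b in (fun b => (1 - t) * c j + t * b) ⁻¹' A,
            auxF c p t ((1 - t) * c j + t * b) ∂(gaussianReal 0 1) := e2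
      _ = ∑ j, (p j : ℝ) * ∫ x in A,
            gaussianPDFReal ((1 - t) * c j) (⟨t ^ 2, sq_nonneg t⟩ : ℝ≥0) x
              * auxF c p t x := by
          exact Finset.sum_congr rfl fun j _ => congrArg (fun z => (p j : ℝ) * z)
            (gauss_push htne ((1 - t) * c j) hA (auxF c p t) (auxF_meas c p t))
      _ = ∑ j, ∫ x in A, (p j : ℝ) *
            (gaussianPDFReal ((1 - t) * c j) (⟨t ^ 2, sq_nonneg t⟩ : ℝ≥0) x
              * auxF c p t x) := by
          exact Finset.sum_congr rfl fun j _ => (integral_const_mul _ _).symm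
      _ = ∫ x in A, ∑ j, (p j : ℝ) *
            (gaussianPDFReal ((1 - t) * c j) (⟨t ^ 2, sq_nonneg t⟩ : ℝ≥0) x
              * auxF c p t x) := (integral_finset_sum _ fun j _ => intf j).symm
      _ = ∫ x in A, ∑ j, (p j : ℝ) *
            (gaussianPDFReal ((1 - t) * c j) (⟨t ^ 2, sq_nonneg t⟩ : ℝ≥0) x
              * c j) :=
          integral_congr_ae (ae_of_all _ fun x => pointwise_id c p hp htne x)
      _ = ∑ j, ∫ x in A, (p j : ℝ) *
            (gaussianPDFReal ((1 - t) * c j) (⟨t ^ 2, sq_nonneg t⟩ : ℝ≥0) x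
              * c j) := integral_finset_sum _ fun j _ => intc j
      _ = ∑ j, (p j : ℝ) * ∫ x in A,
            gaussianPDFReal ((1 - t) * c j) (⟨t ^ 2, sq_nonneg t⟩ : ℝ≥0) x * c j := by
          exact Finset.sum_congr rfl fun j _ => integral_const_mul _ _
      _ = ∑ j, (p j : ℝ) * ∫ b in (fun b => (1 - t) * c j + t * b) ⁻¹' A,
            c j ∂(gaussianReal 0 1) := by
          exact Finset.sum_congr rfl fun j _ => congrArg (fun z => (p j : ℝ) * z)
            (gauss_push htne ((1 - t) * c j) hA (fun _ => c j) measurable_const).symm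
      _ = ∫ x in (fun ω => (1 - t) * X₀ ω + t * ε ω) ⁻¹' A, X₀ x ∂P := e1'.symm
  show P[X₀ | MeasurableSpace.comap (fun ω => (1 - t) * X₀ ω + t * ε ω) inferInstance]
      =ᵐ[P] fun ω => auxF c p t ((1 - t) * X₀ ω + t * ε ω)
  exact (ae_eq_condExp_of_forall_setIntegral_eq hm hX₀int
    (fun s _ _ => hgint.integrableOn) hg_eq hAESM).symm
end
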